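/- Let q ≥ 2 and n ≥ 1. For every partition λ of n, Q_{n,q}(λ) ≤ (1 - 1/q)^{1 - 4√(2n)} · P_{n,q}(λ), i.e., Q_{n,q}(λ) ≤ P_{n,q}(λ) / (1 - 1/q)^{-1 + 4√(2n)}. -/

import Mathlib

open Finset

noncomputable section

/-- The q-Pochhammer-type product `(1/q)_m = ∏_{k=1}^m (1 - 1/q^k)`. -/
def qPoch (q : ℝ) (m : ℕ) : ℝ := ∏ k ∈ Finset.Icc 1 m, (1 - 1/q^k)

/-- `conjPart l j = λ'_j`, the `j`-th part of the conjugate partition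
(the number of parts of `l` that are at least `j`). -/
def conjPart {n : ℕ} (l : n.Partition) (j : ℕ) : ℕ :=
  Multiset.countP (fun p => j ≤ p) l.parts

/-- `rowLen l i = λ_i`, the `i`-th largest part of `l` (1-indexed, `0` if `i` exceeds
the number of parts). -/
def rowLen {n : ℕ} (l : n.Partition) (i : ℕ) : ℕ :=
  ((Finset.Icc 1 n).filter (fun j => i ≤ conjPart l j)).card

/-- The Young diagram of `l`, as the set of cells `(i,j)` (row `i`, column `j`,
both 1-indexed) with `1 ≤ j ≤ λ_i`. -/
def cells {n : ℕ} (l : n.Partition) : Finset (ℕ × ℕ) :=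
  (Finset.Icc 1 n ×ˢ Finset.Icc 1 n).filter (fun s => s.2 ≤ rowLen l s.1)

/-- The arm length `a(s) = λ_i - j` of the cell `s = (i,j)`. -/
def arm {n : ℕ} (l : n.Partition) (s : ℕ × ℕ) : ℕ := rowLen l s.1 - s.2

/-- The leg length `l(s) = λ'_j - i` of the cell `s = (i,j)`. -/
def leg {n : ℕ} (l : n.Partition) (s : ℕ × ℕ) : ℕ := conjPart l s.2 - s.1

/-- The hook length `h(s) = a(s) + l(s) + 1` of the cell `s`. -/
def hookLen {n : ℕ} (l : n.Partition) (s : ℕ × ℕ) : ℕ := arm l s + leg l s + 1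

/-- `n(λ) = ∑_i (i-1) λ_i`. -/
def nStat {n : ℕ} (l : n.Partition) : ℕ := ∑ i ∈ Finset.Icc 1 n, (i - 1) * rowLen l i

/-- The multiplicity `m_j(λ)` of `j` as a part of `l`. -/
def mult {n : ℕ} (l : n.Partition) (j : ℕ) : ℕ := Multiset.count j l.parts

/-- The denominator `∏_j q^{(λ'_j)^2} (1/q)_{m_j(λ)}` appearing in the measure `P_{n,q}`. -/
def Pden (q : ℝ) {n : ℕ} (l : n.Partition) : ℝ :=
  ∏ j ∈ Finset.Icc 1 n, q ^ ((conjPart l j)^2) * qPoch q (mult l j)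

/-- The measure `P_{n,q}(λ) = q^n (1/q)_n / ∏_j q^{(λ'_j)^2} (1/q)_{m_j(λ)}`. -/
def Pmeas (q : ℝ) {n : ℕ} (l : n.Partition) : ℝ := q^n * qPoch q n / Pden q l

/-- `z(n,q)`: the coefficient of `u^n` in the formal expansion of
`∏_{i≥1} ∏_{j≥0} 1/(1 - u/q^{i+j})`, obtained by expanding each factor
as a geometric series and collecting terms of total degree `n`. -/
def zCoeff (n : ℕ) (q : ℝ) : ℝ :=
  ∑' f : {f : (ℕ × ℕ) →₀ ℕ // (f.sum fun _ k => k) = n},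
    ∏ p ∈ (f : (ℕ × ℕ) →₀ ℕ).support,
      ((1 : ℝ) / q ^ ((p.1 + 1) + p.2)) ^ ((f : (ℕ × ℕ) →₀ ℕ) p)

/-- The measure `Q_{n,q}(λ) = (1/z(n,q)) / (q^{|λ|+2n(λ)} ∏_{s∈λ} (1-1/q^{h(s)})^2)`. -/
def Qmeas (q : ℝ) {n : ℕ} (l : n.Partition) : ℝ :=
  (1 / zCoeff n q) *
    (1 / (q ^ (n + 2 * nStat l) * ∏ s ∈ cells l, (1 - 1/q^(hookLen l s))^2))

/-- `P_{n,q}^r`: the `P_{n,q}`-probability that the largest part of `λ` is `< r`. -/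
def Ptail (n : ℕ) (q : ℝ) (r : ℕ) : ℝ :=
  ∑ l ∈ Finset.univ.filter (fun l : n.Partition => ∀ p ∈ l.parts, p < r), Pmeas q l

end

section RealLemmas
variable {q : ℝ}

lemma hq1' (hq : 2 ≤ q) : (1:ℝ) < q := lt_of_lt_of_le one_lt_two hq
lemma hq0' (hq : 2 ≤ q) : (0:ℝ) < q := lt_trans one_pos (hq1' hq)

lemma inv_pow_le (hq : 2 ≤ q) {k : ℕ} (hk : 1 ≤ k) : 1/q^k ≤ 1/q := by
  apply one_div_le_one_div_of_le (hq0' hq)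
  exact le_self_pow₀ (le_of_lt (hq1' hq)) (by omega)

lemma inv_pow_pos (hq : 2 ≤ q) (k : ℕ) : 0 < 1/q^k := by
  have := hq0' hq; positivity

lemma hx_half (hq : 2 ≤ q) : 1/q ≤ 1/2 := one_div_le_one_div_of_le (by norm_num) hq

lemma fac_pos (hq : 2 ≤ q) {k : ℕ} (hk : 1 ≤ k) : 0 < 1 - 1/q^k := by
  have h1 := inv_pow_le hq hk
  have h2 := hx_half hq
  linarith

lemma fac_le_one (hq : 2 ≤ q) (k : ℕ) : 1 - 1/q^k ≤ 1 := by
  have := inv_pow_pos hq k; linarith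

/-- product of (1 - a_i) ≥ 1 - ∑ a_i -/
lemma prod_one_sub_ge {ι : Type*} (s : Finset ι) (f : ι → ℝ)
    (h0 : ∀ i ∈ s, 0 ≤ f i) (h1 : ∀ i ∈ s, f i ≤ 1) :
    1 - ∑ i ∈ s, f i ≤ ∏ i ∈ s, (1 - f i) := by
  classical
  induction s using Finset.induction_on with
  | empty => simp
  | @insert a s' hx ih =>
    rw [Finset.sum_insert hx, Finset.prod_insert hx]
    have h0' : ∀ i ∈ s', 0 ≤ f i := fun i hi => h0 i (mem_insert_of_mem hi)
    have h1' : ∀ i ∈ s', f i ≤ 1 := fun i hi => h1 i (mem_insert_of_mem hi)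
    have ih' := ih h0' h1'
    have ha0 : 0 ≤ f a := h0 a (mem_insert_self a s')
    have ha1 : f a ≤ 1 := h1 a (mem_insert_self a s')
    have hs0 : 0 ≤ ∑ i ∈ s', f i := Finset.sum_nonneg h0'
    nlinarith

lemma geom_tail_aux {x : ℝ} (h0 : 0 ≤ x) (h2 : x ≤ 1/2) :
    ∀ m : ℕ, ∑ k ∈ Icc 2 (m+2), x^k ≤ 2*x^2 - 2*x^(m+3) := by
  intro m
  induction m with
  | zero =>
    simp [Finset.Icc_self]
    nlinarith
  | succ m ih =>
    have h : (2:ℕ) ≤ m + 3 := by omega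
    have := Finset.sum_Icc_succ_top h (fun k => x^k)
    have e : m + 1 + 2 = m + 2 + 1 := by ring
    rw [e, this]
    have hp : x^(m+3) ≥ 2 * x^(m+4) := by
      have : x^(m+4) = x^(m+3) * x := by ring
      rw [this]
      nlinarith [pow_nonneg h0 (m+3)]
    have e2 : m + 2 + 1 = m + 3 := by ring
    rw [e2]
    have e3 : m + 1 + 3 = m + 4 := by ring
    rw [e3]
    linarith

lemma sum_tail_le (hq : 2 ≤ q) (m : ℕ) : ∑ k ∈ Icc 2 m, 1/q^k ≤ 1/q := by
  have hx : (0:ℝ) < 1/q := by have := hq0' hq; positivity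
  have hx2 : 1/q ≤ 1/2 := hx_half hq
  have hrw : ∑ k ∈ Icc 2 m, 1/q^k = ∑ k ∈ Icc 2 m, (1/q)^k := by
    apply Finset.sum_congr rfl; intro k _; rw [one_div_pow]
  rw [hrw]
  rcases Nat.lt_or_ge m 2 with hm | hm
  · have : Icc 2 m = ∅ := by
      apply Finset.Icc_eq_empty; omega
    rw [this]; simp; positivity
  · obtain ⟨m', rfl⟩ : ∃ m', m = m' + 2 := ⟨m - 2, by omega⟩
    have := geom_tail_aux (le_of_lt hx) hx2 m'
    have hp : (0:ℝ) ≤ (1/q)^(m'+3) := by positivity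
    nlinarith

/-- `qPoch q m ≥ (1-1/q)^2` -/
lemma qPoch_core (hq : 2 ≤ q) (m : ℕ) : 1 - 1/q ≤ ∏ k ∈ Icc 2 m, (1 - 1/q^k) := by
  have h := prod_one_sub_ge (Icc 2 m) (fun k => 1/q^k)
    (fun k _ => le_of_lt (inv_pow_pos hq k))
    (fun k hk => by
      have := inv_pow_le hq (k := k) (by have := (mem_Icc.1 hk).1; omega)
      have := hx_half hq; linarith)
  have := sum_tail_le hq m
  linarith
end RealLemmas
section R2
variable {q : ℝ}
lemma one_sub_x_pos (hq : 2 ≤ q) : 0 < 1 - 1/q := by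
  have := hx_half hq; linarith

lemma qPoch_pos (hq : 2 ≤ q) (m : ℕ) : 0 < qPoch q m := by
  apply Finset.prod_pos
  intro k hk
  exact fac_pos hq (mem_Icc.1 hk).1

lemma qPoch_le_one (hq : 2 ≤ q) (m : ℕ) : qPoch q m ≤ 1 := by
  apply Finset.prod_le_one
  · intro k hk; exact le_of_lt (fac_pos hq (mem_Icc.1 hk).1)
  · intro k hk; exact fac_le_one hq k

lemma Icc_one_split (m : ℕ) (hm : 1 ≤ m) : Icc 1 m = insert 1 (Icc 2 m) := by
  ext k; simp [mem_Icc, mem_insert]; omega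

lemma qPoch_ge (hq : 2 ≤ q) (m : ℕ) : (1 - 1/q)^2 ≤ qPoch q m := by
  rcases Nat.lt_or_ge m 1 with hm | hm
  · interval_cases m
    unfold qPoch
    rw [show Icc 1 0 = (∅ : Finset ℕ) by rfl, Finset.prod_empty]
    have h1 := one_sub_x_pos hq
    have h2 := hx_half hq
    have h3 : 0 < 1/q := by have := hq0' hq; positivity
    nlinarith [mul_le_mul_of_nonneg_left h2 (le_of_lt h3)]
  · unfold qPoch
    rw [Icc_one_split m hm, Finset.prod_insert (by simp)]
    have h1 := qPoch_core hq m
    have h2 := one_sub_x_pos hq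
    have : (1:ℝ) - 1/q^1 = 1 - 1/q := by rw [pow_one]
    rw [this, sq]
    exact mul_le_mul_of_nonneg_left h1 (le_of_lt h2)

lemma qPoch_le_fac (hq : 2 ≤ q) {m : ℕ} (hm : 1 ≤ m) : qPoch q m ≤ 1 - 1/q := by
  unfold qPoch
  rw [Icc_one_split m hm, Finset.prod_insert (by simp), pow_one]
  have h2 := one_sub_x_pos hq
  have hle : ∏ k ∈ Icc 2 m, (1 - 1/q^k) ≤ 1 := by
    apply Finset.prod_le_one
    · intro k hk; exact le_of_lt (fac_pos hq (by have := (mem_Icc.1 hk).1; omega))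
    · intro k hk; exact fac_le_one hq k
  nlinarith [Finset.prod_nonneg (fun k (hk : k ∈ Icc 2 m) => le_of_lt (fac_pos hq (k := k) (by have := (mem_Icc.1 hk).1; omega)))]

end R2
section Comb
variable {n : ℕ} (l : n.Partition)

lemma parts_le : ∀ p ∈ l.parts, p ≤ n := by
  intro p hp
  have := Multiset.single_le_sum (fun x (_ : x ∈ l.parts) => Nat.zero_le x) p hp
  rwa [l.parts_sum] at this

lemma conjPart_anti {j j' : ℕ} (h : j ≤ j') : conjPart l j' ≤ conjPart l j := by
  unfold conjPart
  rw [Multiset.countP_eq_card_filter, Multiset.countP_eq_card_filter]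
  apply Multiset.card_le_card
  apply Multiset.monotone_filter_right
  intro p hp
  omega

lemma card_parts_le : Multiset.card l.parts ≤ n := by
  have h : ∀ (s : Multiset ℕ), (∀ p ∈ s, 1 ≤ p) → Multiset.card s ≤ s.sum := by
    intro s
    induction s using Multiset.induction_on with
    | empty => simp
    | cons a s ih =>
      intro hp
      rw [Multiset.card_cons, Multiset.sum_cons]
      have := ih (fun p hps => hp p (Multiset.mem_cons_of_mem hps))
      have := hp a (Multiset.mem_cons_self a s)
      omega
  have := h l.parts (fun p hp => l.parts_pos hp)
  rwa [l.parts_sum] at this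

lemma conjPart_le (j : ℕ) : conjPart l j ≤ n :=
  le_trans (Multiset.countP_le_card _ _) (card_parts_le l)

lemma rowLen_le (i : ℕ) : rowLen l i ≤ n := by
  have h := Finset.card_filter_le (Icc 1 n) (fun j => i ≤ conjPart l j)
  simpa [rowLen] using h

lemma rowLen_anti {i i' : ℕ} (h : i ≤ i') : rowLen l i' ≤ rowLen l i := by
  apply Finset.card_le_card
  intro j hj
  rw [Finset.mem_filter] at hj ⊢
  exact ⟨hj.1, le_trans h hj.2⟩

lemma mem_iff {i j : ℕ} (hj1 : 1 ≤ j) (hjn : j ≤ n) :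
    j ≤ rowLen l i ↔ i ≤ conjPart l j := by
  constructor
  · intro h
    by_contra hlt
    push_neg at hlt
    have hsub : (Icc 1 n).filter (fun j' => i ≤ conjPart l j') ⊆ Ico 1 j := by
      intro j' hj'
      rw [mem_filter, mem_Icc] at hj'
      rw [mem_Ico]
      refine ⟨hj'.1.1, ?_⟩
      by_contra hge
      push_neg at hge
      exact absurd (le_trans hj'.2 (conjPart_anti l hge)) (by omega)
    have := Finset.card_le_card hsub
    rw [Nat.card_Ico] at this
    unfold rowLen at h
    omega
  · intro h
    have hsub : Icc 1 j ⊆ (Icc 1 n).filter (fun j' => i ≤ conjPart l j') := by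
      intro j' hj'
      rw [mem_Icc] at hj'
      rw [mem_filter, mem_Icc]
      exact ⟨⟨hj'.1, le_trans hj'.2 hjn⟩, le_trans h (conjPart_anti l hj'.2)⟩
    have := Finset.card_le_card hsub
    rw [Nat.card_Icc] at this
    unfold rowLen
    omega

lemma sum_countP_aux (N : ℕ) : ∀ (s : Multiset ℕ), (∀ p ∈ s, p ≤ N) →
    ∑ j ∈ Icc 1 N, Multiset.countP (fun p => j ≤ p) s = s.sum := by
  intro s
  induction s using Multiset.induction_on with
  | empty => simp
  | cons a s ih =>
    intro hp
    have ha : a ≤ N := hp a (Multiset.mem_cons_self a s)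
    have ih' := ih (fun p hps => hp p (Multiset.mem_cons_of_mem hps))
    simp only [Multiset.countP_cons, Finset.sum_add_distrib, ih', Multiset.sum_cons,
      decide_eq_true_eq]
    have hh : ∀ j : ℕ, (if a ≥ j then 1 else 0) = (if j ≤ a then 1 else 0) := by
      intro j; congr 1
    have : ∑ j ∈ Icc 1 N, (if j ≤ a then (1:ℕ) else 0) = a := by
      rw [← Finset.card_filter]
      have : (Icc 1 N).filter (fun j => j ≤ a) = Icc 1 a := by
        ext j; simp only [mem_Icc, mem_filter]; omega
      rw [this, Nat.card_Icc]
      omega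
    simp only [ge_iff_le] at *
    omega

lemma sum_conjPart : ∑ j ∈ Icc 1 n, conjPart l j = n := by
  have := sum_countP_aux n l.parts (parts_le l)
  unfold conjPart
  convert this using 2
  rw [l.parts_sum]

lemma sum_rowLen : ∑ i ∈ Icc 1 n, rowLen l i = n := by
  unfold rowLen
  have : ∀ i, ((Icc 1 n).filter (fun j => i ≤ conjPart l j)).card
      = ∑ j ∈ Icc 1 n, if i ≤ conjPart l j then 1 else 0 := by
    intro i; rw [Finset.card_filter]
  simp only [this]
  rw [Finset.sum_comm]
  have inner : ∀ j ∈ Icc 1 n, (∑ i ∈ Icc 1 n, if i ≤ conjPart l j then 1 else 0) = conjPart l j := by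
    intro j _
    rw [← Finset.card_filter]
    have : (Icc 1 n).filter (fun i => i ≤ conjPart l j) = Icc 1 (conjPart l j) := by
      ext i; simp only [mem_Icc, mem_filter]
      have := conjPart_le l j; omega
    rw [this, Nat.card_Icc]
    omega
  rw [Finset.sum_congr rfl inner]
  exact sum_conjPart l

lemma sum_odd_sq (a : ℕ) : ∑ i ∈ Icc 1 a, (2*i - 1) = a^2 := by
  induction a with
  | zero => simp
  | succ a ih =>
    rw [Finset.sum_Icc_succ_top (by omega : 1 ≤ a + 1), ih]
    ring_nf
    omega

lemma sum_conjPart_sq : ∑ j ∈ Icc 1 n, (conjPart l j)^2 = n + 2 * nStat l := by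
  have step1 : ∀ j ∈ Icc 1 n, (conjPart l j)^2
      = ∑ i ∈ Icc 1 n, (if i ≤ conjPart l j then 2*i-1 else 0) := by
    intro j _
    rw [← Finset.sum_filter]
    have : (Icc 1 n).filter (fun i => i ≤ conjPart l j) = Icc 1 (conjPart l j) := by
      ext i; simp only [mem_Icc, mem_filter]
      have := conjPart_le l j; omega
    rw [this, sum_odd_sq]
  rw [Finset.sum_congr rfl step1, Finset.sum_comm]
  have step2 : ∀ i ∈ Icc 1 n,
      (∑ j ∈ Icc 1 n, if i ≤ conjPart l j then 2*i-1 else 0) = (2*i-1) * rowLen l i := by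
    intro i _
    rw [← Finset.sum_filter]
    rw [Finset.sum_const, smul_eq_mul]
    unfold rowLen
    ring
  rw [Finset.sum_congr rfl step2]
  have step3 : ∀ i ∈ Icc 1 n, (2*i-1) * rowLen l i = 2*((i-1)*rowLen l i) + rowLen l i := by
    intro i hi
    have : 1 ≤ i := (mem_Icc.1 hi).1
    have e : 2*i-1 = 2*(i-1)+1 := by omega
    rw [e]; ring
  rw [Finset.sum_congr rfl step3, Finset.sum_add_distrib, sum_rowLen, ← Finset.mul_sum]
  unfold nStat
  omega

lemma mem_cells {s : ℕ × ℕ} (hs : s ∈ cells l) :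
    1 ≤ s.1 ∧ s.1 ≤ n ∧ 1 ≤ s.2 ∧ s.2 ≤ n ∧ s.2 ≤ rowLen l s.1 ∧ s.1 ≤ conjPart l s.2 := by
  unfold cells at hs
  rw [Finset.mem_filter, Finset.mem_product, mem_Icc, mem_Icc] at hs
  obtain ⟨⟨⟨h1,h2⟩,⟨h3,h4⟩⟩, h5⟩ := hs
  exact ⟨h1, h2, h3, h4, h5, (mem_iff l h3 h4).1 h5⟩

lemma card_cells_le : (cells l).card ≤ n := by
  classical
  have hmap : ∀ s ∈ cells l, s.1 ∈ Icc 1 n := by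
    intro s hs; have := mem_cells l hs; rw [mem_Icc]; exact ⟨this.1, this.2.1⟩
  rw [Finset.card_eq_sum_card_fiberwise hmap]
  have hfib : ∀ i ∈ Icc 1 n, ((cells l).filter (fun s => s.1 = i)).card ≤ rowLen l i := by
    intro i _
    have hinj : Set.InjOn Prod.snd (((cells l).filter (fun s => s.1 = i) : Finset (ℕ × ℕ)) : Set (ℕ × ℕ)) := by
      intro s hs t ht hst
      rw [Finset.coe_filter] at hs ht
      simp only [Set.mem_setOf_eq] at hs ht
      exact Prod.ext (hs.2.trans ht.2.symm) hst
    rw [← Finset.card_image_of_injOn hinj]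
    have : ((cells l).filter (fun s => s.1 = i)).image Prod.snd ⊆ Icc 1 (rowLen l i) := by
      intro j hj
      rw [Finset.mem_image] at hj
      obtain ⟨s, hs, rfl⟩ := hj
      rw [Finset.mem_filter] at hs
      have hm := mem_cells l hs.1
      rw [mem_Icc]
      exact ⟨hm.2.2.1, hs.2 ▸ hm.2.2.2.2.1⟩
    calc _ ≤ (Icc 1 (rowLen l i)).card := Finset.card_le_card this
    _ = rowLen l i := by rw [Nat.card_Icc]; omega
  calc _ ≤ ∑ i ∈ Icc 1 n, rowLen l i := Finset.sum_le_sum hfib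
  _ = n := sum_rowLen l

lemma hook_lt {s t : ℕ × ℕ} (hs : s ∈ cells l) (ht : t ∈ cells l)
    (h1 : s.1 ≤ t.1) (h2 : s.2 ≤ t.2) (hne : s ≠ t) : hookLen l t < hookLen l s := by
  have hms := mem_cells l hs
  have hmt := mem_cells l ht
  have hr : rowLen l t.1 ≤ rowLen l s.1 := rowLen_anti l h1
  have hc : conjPart l t.2 ≤ conjPart l s.2 := conjPart_anti l h2
  have hne' : s.1 < t.1 ∨ s.2 < t.2 := by
    by_contra hcon
    push_neg at hcon
    exact hne (Prod.ext (le_antisymm h1 hcon.1) (le_antisymm h2 hcon.2))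
  unfold hookLen arm leg
  omega

lemma sum_distinct_pos (T : Finset ℕ) (hT : ∀ t ∈ T, 1 ≤ t) :
    T.card * (T.card + 1) ≤ 2 * ∑ t ∈ T, t := by
  classical
  induction T using Finset.strongInductionOn with
  | _ T ih =>
    rcases T.eq_empty_or_nonempty with rfl | hne
    · simp
    · have hmax := T.max'_mem hne
      set m := T.max' hne with hm
      have hTm : T ⊆ Icc 1 m := by
        intro t ht
        rw [mem_Icc]
        exact ⟨hT t ht, T.le_max' t ht⟩
      have hcard : T.card ≤ m := by
        calc T.card ≤ (Icc 1 m).card := Finset.card_le_card hTm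
        _ = m := by rw [Nat.card_Icc]; omega
      have hsum : ∑ t ∈ T, t = m + ∑ t ∈ T.erase m, t :=
        (Finset.add_sum_erase T id hmax).symm
      have hss : T.erase m ⊂ T := Finset.erase_ssubset hmax
      have ih' := ih (T.erase m) hss (fun t ht => hT t (Finset.mem_of_mem_erase ht))
      rw [Finset.card_erase_of_mem hmax] at ih'
      have hc1 : 1 ≤ T.card := Finset.card_pos.2 hne
      obtain ⟨d, hd⟩ : ∃ d, T.card = d + 1 := ⟨T.card - 1, by omega⟩
      rw [hd] at ih' ⊢
      simp only [Nat.add_sub_cancel] at ih'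
      rw [hsum]
      have : d + 1 ≤ m := hd ▸ hcard
      nlinarith

lemma fiber_bound (h : ℕ) :
    ((cells l).filter (fun s => hookLen l s = h)).card *
      (((cells l).filter (fun s => hookLen l s = h)).card + 1) ≤ 2 * n := by
  classical
  set S := (cells l).filter (fun s => hookLen l s = h) with hS
  have hSc : ∀ s ∈ S, s ∈ cells l ∧ hookLen l s = h := by
    intro s hs; rw [hS, Finset.mem_filter] at hs; exact hs
  -- distinct rows and columns
  have key : ∀ s ∈ S, ∀ t ∈ S, s ≠ t → s.1 ≠ t.1 ∧ s.2 ≠ t.2 := by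
    intro s hs t ht hne
    obtain ⟨hsc, hsh⟩ := hSc s hs
    obtain ⟨htc, hth⟩ := hSc t ht
    constructor
    · intro he
      rcases le_total s.2 t.2 with h2 | h2
      · exact absurd (hook_lt l hsc htc (le_of_eq he) h2 hne) (by omega)
      · exact absurd (hook_lt l htc hsc (le_of_eq he.symm) h2 (Ne.symm hne)) (by omega)
    · intro he
      rcases le_total s.1 t.1 with h1 | h1
      · exact absurd (hook_lt l hsc htc h1 (le_of_eq he) hne) (by omega)
      · exact absurd (hook_lt l htc hsc h1 (le_of_eq he.symm) (Ne.symm hne)) (by omega)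
  -- the sum of column indices over S
  have hJ_upper : ∑ s ∈ S, s.2 ≤ n := by
    have hdisj : ∀ s ∈ S, ∀ t ∈ S, s ≠ t →
        Disjoint ((Icc 1 s.2).image (fun j => (s.1, j)))
          ((Icc 1 t.2).image (fun j => (t.1, j))) := by
      intro s hs t ht hne
      rw [Finset.disjoint_left]
      intro a ha hb
      rw [Finset.mem_image] at ha hb
      obtain ⟨j1, _, rfl⟩ := ha
      obtain ⟨j2, _, he⟩ := hb
      exact (key s hs t ht hne).1 (congrArg Prod.fst he).symm
    have hcardim : ∀ s ∈ S, ((Icc 1 s.2).image (fun j => (s.1, j))).card = s.2 := by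
      intro s _
      rw [Finset.card_image_of_injective _ (fun a b hab => (Prod.ext_iff.1 hab).2),
        Nat.card_Icc]
      omega
    have hsub : S.biUnion (fun s => (Icc 1 s.2).image (fun j => (s.1, j))) ⊆ cells l := by
      intro a ha
      rw [Finset.mem_biUnion] at ha
      obtain ⟨s, hs, ha⟩ := ha
      rw [Finset.mem_image] at ha
      obtain ⟨j, hj, rfl⟩ := ha
      rw [mem_Icc] at hj
      have hm := mem_cells l (hSc s hs).1
      unfold cells
      rw [Finset.mem_filter, Finset.mem_product, mem_Icc, mem_Icc]
      exact ⟨⟨⟨hm.1, hm.2.1⟩, ⟨hj.1, le_trans hj.2 (le_trans hm.2.2.2.1 (le_refl n))⟩⟩,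
        le_trans hj.2 hm.2.2.2.2.1⟩
    calc ∑ s ∈ S, s.2 = (S.biUnion (fun s => (Icc 1 s.2).image (fun j => (s.1, j)))).card := by
          rw [Finset.card_biUnion hdisj]
          exact (Finset.sum_congr rfl hcardim).symm
    _ ≤ (cells l).card := Finset.card_le_card hsub
    _ ≤ n := card_cells_le l
  have hJ_lower : S.card * (S.card + 1) ≤ 2 * ∑ s ∈ S, s.2 := by
    have hinj : ∀ s ∈ S, ∀ t ∈ S, Prod.snd s = Prod.snd t → s = t := by
      intro s hs t ht he
      by_contra hne
      exact (key s hs t ht hne).2 he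
    have him : ∑ j ∈ S.image Prod.snd, j = ∑ s ∈ S, s.2 := Finset.sum_image hinj
    have hcardim : (S.image Prod.snd).card = S.card := Finset.card_image_of_injOn
      (fun s hs t ht he => hinj s (by simpa using hs) t (by simpa using ht) he)
    have hpos : ∀ j ∈ S.image Prod.snd, 1 ≤ j := by
      intro j hj
      rw [Finset.mem_image] at hj
      obtain ⟨s, hs, rfl⟩ := hj
      exact (mem_cells l (hSc s hs).1).2.2.1
    have := sum_distinct_pos (S.image Prod.snd) hpos
    rw [hcardim, him] at this
    exact this
  omega

end Comb

lemma K_le_sqrt {n : ℕ} (hn : 1 ≤ n) :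
    (((Nat.sqrt (8*n+1) - 1)/2 : ℕ) : ℝ) ≤ Real.sqrt (2*n) - 1/4 := by
  set s := Nat.sqrt (8*n+1) with hs
  set K := (s - 1)/2 with hK
  have hs3 : 3 ≤ s := by
    rw [hs, Nat.le_sqrt]
    omega
  have h2K : 2*K + 1 ≤ s := by omega
  have hsq : s^2 ≤ 8*n+1 := Nat.sqrt_le' (8*n+1)
  have hKsq : (2*K+1)^2 ≤ 8*n+1 := le_trans (Nat.pow_le_pow_left h2K 2) hsq
  have hreal : ((2*K+1 : ℕ) : ℝ)^2 ≤ 8*(n:ℝ)+1 := by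
    have := (Nat.cast_le (α := ℝ)).2 hKsq
    push_cast at this ⊢
    linarith
  have hsqrt : Real.sqrt (2*n) ≥ 1 := by
    rw [show (1:ℝ) = Real.sqrt 1 by simp]
    apply Real.sqrt_le_sqrt
    have : (1:ℝ) ≤ n := by exact_mod_cast hn
    linarith
  have hsq2 : (2 * Real.sqrt (2*n) + 1/2)^2 = 8*n + 2*Real.sqrt (2*n) + 1/4 := by
    have : Real.sqrt (2*n)^2 = 2*n := Real.sq_sqrt (by positivity)
    nlinarith [this]
  have hup : ((2*K+1 : ℕ) : ℝ)^2 ≤ (2 * Real.sqrt (2*n) + 1/2)^2 := by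
    rw [hsq2]; linarith
  have hfin : ((2*K+1 : ℕ) : ℝ) ≤ 2 * Real.sqrt (2*n) + 1/2 := by
    nlinarith [Nat.cast_nonneg (α := ℝ) (2*K+1), hsqrt]
  push_cast at hfin ⊢
  linarith

section Z
variable {q : ℝ} {n : ℕ}

lemma zCoeff_ge (hq : 2 ≤ q) (hn : 1 ≤ n)
    (hs : Summable (fun f : {f : (ℕ × ℕ) →₀ ℕ // (f.sum fun _ k => k) = n} =>
      ∏ p ∈ (f : (ℕ × ℕ) →₀ ℕ).support,
        ((1 : ℝ) / q ^ ((p.1 + 1) + p.2)) ^ ((f : (ℕ × ℕ) →₀ ℕ) p))) :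
    (1/q)^n * (1 + 2/q) ≤ zCoeff n q := by
  classical
  have hq0 : (0:ℝ) < q := lt_of_lt_of_le (by norm_num) hq
  set g : ((ℕ × ℕ) →₀ ℕ) → ℝ :=
    fun f => ∏ p ∈ f.support, ((1 : ℝ) / q ^ ((p.1 + 1) + p.2)) ^ (f p) with hg
  have hgprod : ∀ f : (ℕ × ℕ) →₀ ℕ,
      g f = f.prod (fun p k => ((1:ℝ)/q^((p.1+1)+p.2))^k) := fun _ => rfl
  have hgnn : ∀ f, 0 ≤ g f := by
    intro f
    apply Finset.prod_nonneg
    intro p _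
    positivity
  -- the three special finsupps
  set f1 : (ℕ × ℕ) →₀ ℕ := Finsupp.single ((0:ℕ),(0:ℕ)) n with hf1
  set f2 : (ℕ × ℕ) →₀ ℕ := Finsupp.single ((0:ℕ),(0:ℕ)) (n-1) + Finsupp.single ((0:ℕ),(1:ℕ)) 1 with hf2
  set f3 : (ℕ × ℕ) →₀ ℕ := Finsupp.single ((0:ℕ),(0:ℕ)) (n-1) + Finsupp.single ((1:ℕ),(0:ℕ)) 1 with hf3
  have hsum1 : (f1.sum fun _ k => k) = n := by
    rw [hf1, Finsupp.sum_single_index rfl]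
  have hsum2 : (f2.sum fun _ k => k) = n := by
    rw [hf2, Finsupp.sum_add_index' (fun _ => rfl) (fun _ _ _ => rfl),
      Finsupp.sum_single_index rfl, Finsupp.sum_single_index rfl]
    omega
  have hsum3 : (f3.sum fun _ k => k) = n := by
    rw [hf3, Finsupp.sum_add_index' (fun _ => rfl) (fun _ _ _ => rfl),
      Finsupp.sum_single_index rfl, Finsupp.sum_single_index rfl]
    omega
  have hsing : ∀ (p : ℕ × ℕ) (m : ℕ),
      ((Finsupp.single p m).prod (fun p k => ((1:ℝ)/q^((p.1+1)+p.2))^k))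
        = ((1:ℝ)/q^((p.1+1)+p.2))^m := by
    intro p m
    exact Finsupp.prod_single_index (pow_zero _)
  have hg1 : g f1 = (1/q)^n := by
    rw [hgprod, hf1, hsing]
    norm_num
  have hg2 : g f2 = (1/q)^(n-1) * (1/q^2) := by
    rw [hgprod, hf2, Finsupp.prod_add_index' (fun p => pow_zero _) (fun p b c => pow_add _ b c),
      hsing, hsing]
    norm_num
  have hg3 : g f3 = (1/q)^(n-1) * (1/q^2) := by
    rw [hgprod, hf3, Finsupp.prod_add_index' (fun p => pow_zero _) (fun p b c => pow_add _ b c),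
      hsing, hsing]
    norm_num
  have hval : ∀ (a b m : ℕ × ℕ) (k : ℕ), a ≠ b →
      (Finsupp.single a k) b = 0 ∧ (Finsupp.single b k) b = k := by
    intro a b m k hab
    constructor
    · rw [Finsupp.single_apply, if_neg hab]
    · rw [Finsupp.single_apply, if_pos rfl]
  have e1 : f1 ((0:ℕ),(1:ℕ)) = 0 := by
    rw [hf1, Finsupp.single_apply, if_neg (by decide)]
  have e2 : f2 ((0:ℕ),(1:ℕ)) = 1 := by
    rw [hf2, Finsupp.add_apply, Finsupp.single_apply, Finsupp.single_apply,
      if_neg (by decide), if_pos rfl]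
  have e3 : f3 ((0:ℕ),(1:ℕ)) = 0 := by
    rw [hf3, Finsupp.add_apply, Finsupp.single_apply, Finsupp.single_apply,
      if_neg (by decide), if_neg (by decide)]
    rfl
  have e1' : f1 ((1:ℕ),(0:ℕ)) = 0 := by
    rw [hf1, Finsupp.single_apply, if_neg (by decide)]
  have e3' : f3 ((1:ℕ),(0:ℕ)) = 1 := by
    rw [hf3, Finsupp.add_apply, Finsupp.single_apply, Finsupp.single_apply,
      if_neg (by decide), if_pos rfl]
  have h12 : f1 ≠ f2 := by
    intro h; rw [h, e2] at e1; exact one_ne_zero e1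
  have h13 : f1 ≠ f3 := by
    intro h; rw [h, e3'] at e1'; exact one_ne_zero e1'
  have h23 : f2 ≠ f3 := by
    intro h; rw [h, e3] at e2; exact zero_ne_one e2
  set a1 : {f : (ℕ × ℕ) →₀ ℕ // (f.sum fun _ k => k) = n} := ⟨f1, hsum1⟩
  set a2 : {f : (ℕ × ℕ) →₀ ℕ // (f.sum fun _ k => k) = n} := ⟨f2, hsum2⟩
  set a3 : {f : (ℕ × ℕ) →₀ ℕ // (f.sum fun _ k => k) = n} := ⟨f3, hsum3⟩
  have ha12 : a1 ≠ a2 := fun h => h12 (congrArg Subtype.val h)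
  have ha13 : a1 ≠ a3 := fun h => h13 (congrArg Subtype.val h)
  have ha23 : a2 ≠ a3 := fun h => h23 (congrArg Subtype.val h)
  have hfin : ∑ a ∈ ({a1, a2, a3} : Finset _), g a.val ≤ zCoeff n q := by
    apply Summable.sum_le_tsum _ (fun a _ => hgnn a.val) hs
  have hsum3' : ∑ a ∈ ({a1, a2, a3} : Finset _), g a.val
      = g f1 + g f2 + g f3 := by
    rw [Finset.sum_insert (by simp [ha12, ha13]), Finset.sum_insert (by simp [ha23]),
      Finset.sum_singleton]
    ring
  rw [hsum3', hg1, hg2, hg3] at hfin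
  have hpow : (1/q)^(n-1) * (1/q^2) = (1/q)^n * (1/q) := by
    rw [show (1:ℝ)/q^2 = (1/q)^2 by rw [one_div_pow], ← pow_add,
      show n - 1 + 2 = n + 1 by omega, pow_succ]
  rw [hpow] at hfin
  have : (1/q)^n * (1 + 2/q) = (1/q)^n + 2*((1/q)^n * (1/q)) := by
    ring
  rw [this]
  linarith
end Z

theorem stmt15 (q : ℝ) (hq : 2 ≤ q) (n : ℕ) (hn : 1 ≤ n) (l : n.Partition) :
    Qmeas q l ≤ (1 - 1/q) ^ ((1 : ℝ) - 4 * Real.sqrt (2 * n)) * Pmeas q l := by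
  classical
  have hq0 : (0:ℝ) < q := hq0' hq
  have hxpos : (0:ℝ) < 1/q := by positivity
  have hx : 0 < 1 - 1/q := one_sub_x_pos hq
  have hx1 : 1 - 1/q ≤ 1 := by linarith
  have hPdenpos : 0 < Pden q l := by
    unfold Pden
    apply Finset.prod_pos
    intro j _
    exact mul_pos (pow_pos hq0 _) (qPoch_pos hq _)
  have hPpos : 0 < Pmeas q l := by
    unfold Pmeas
    exact div_pos (mul_pos (pow_pos hq0 n) (qPoch_pos hq n)) hPdenpos
  set C := (1 - 1/q) ^ ((1:ℝ) - 4 * Real.sqrt (2 * (n:ℝ))) with hCdef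
  have hCpos : 0 < C := Real.rpow_pos_of_pos hx _
  by_cases hsummable : Summable (fun f : {f : (ℕ × ℕ) →₀ ℕ // (f.sum fun _ k => k) = n} =>
      ∏ p ∈ (f : (ℕ × ℕ) →₀ ℕ).support,
        ((1 : ℝ) / q ^ ((p.1 + 1) + p.2)) ^ ((f : (ℕ × ℕ) →₀ ℕ) p))
  case neg =>
    have hz : zCoeff n q = 0 := tsum_eq_zero_of_not_summable hsummable
    unfold Qmeas
    rw [hz]
    simp only [div_zero, zero_mul, one_div]
    exact le_of_lt (mul_pos hCpos hPpos)
  case pos =>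
  set K := (Nat.sqrt (8*n+1) - 1)/2 with hKdef
  set B := ∏ s ∈ cells l, (1 - 1/q^(hookLen l s)) with hBdef
  set A := ∏ j ∈ Icc 1 n, qPoch q (mult l j) with hAdef
  have hBpos : 0 < B := by
    rw [hBdef]
    exact Finset.prod_pos (fun s hs => fac_pos hq (by unfold hookLen; omega))
  have hApos : 0 < A := by
    rw [hAdef]
    exact Finset.prod_pos (fun j _ => qPoch_pos hq _)
  have hXpos : 0 < (q:ℝ)^(n+2*nStat l) := pow_pos hq0 _
  -- lower bound for B
  have hmap : ∀ s ∈ cells l, hookLen l s ∈ Icc 1 (2*n+1) := by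
    intro s hs
    have hm := mem_cells l hs
    have h1 := rowLen_le l s.1
    have h2 := conjPart_le l s.2
    rw [mem_Icc]
    unfold hookLen arm leg
    omega
  have hfibers := Finset.prod_fiberwise_of_maps_to hmap (fun s => 1 - 1/q^(hookLen l s))
  have hinner : ∀ h ∈ Icc 1 (2*n+1),
      ((1 - 1/q^h)^K : ℝ) ≤
        ∏ s ∈ (cells l).filter (fun s => hookLen l s = h), (1 - 1/q^(hookLen l s)) := by
    intro h hh
    have hh1 : 1 ≤ h := (mem_Icc.1 hh).1
    have heq : ∏ s ∈ (cells l).filter (fun s => hookLen l s = h), (1 - 1/q^(hookLen l s))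
        = (1 - 1/q^h)^(((cells l).filter (fun s => hookLen l s = h)).card) := by
      rw [Finset.prod_congr rfl (fun s hs => by rw [(Finset.mem_filter.1 hs).2]),
        Finset.prod_const]
    rw [heq]
    apply pow_le_pow_of_le_one (le_of_lt (fac_pos hq hh1)) (fac_le_one hq h)
    have hfb := fiber_bound l h
    set r := ((cells l).filter (fun s => hookLen l s = h)).card with hr
    have hsq : (2*r+1)*(2*r+1) ≤ 8*n+1 := by nlinarith
    have h2r : 2*r+1 ≤ Nat.sqrt (8*n+1) := Nat.le_sqrt.2 hsq
    omega
  have hBlow1 : ∏ h ∈ Icc 1 (2*n+1), ((1 - 1/q^h)^K) ≤ B := by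
    rw [hBdef, ← hfibers]
    apply Finset.prod_le_prod
    · intro h hh
      exact pow_nonneg (le_of_lt (fac_pos hq (mem_Icc.1 hh).1)) K
    · exact hinner
  have hBlow : ((1 - 1/q)^2)^K ≤ B := by
    calc ((1 - 1/q)^2)^K ≤ (qPoch q (2*n+1))^K :=
          pow_le_pow_left₀ (by positivity) (qPoch_ge hq _) K
    _ = ∏ h ∈ Icc 1 (2*n+1), ((1 - 1/q^h)^K) := by
          unfold qPoch
          exact (Finset.prod_pow _ _ _).symm
    _ ≤ B := hBlow1
  -- z bound
  have hzge := zCoeff_ge hq hn hsummable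
  have hzpos : 0 < zCoeff n q := lt_of_lt_of_le (by positivity) hzge
  have hzinv : 1 / zCoeff n q ≤ q^n * (1 - 1/q) := by
    rw [div_le_iff₀ hzpos]
    have hqn1 : q^n * (1/q)^n = 1 := by
      rw [← mul_pow, mul_one_div, div_self (ne_of_gt hq0), one_pow]
    have h2 : (1:ℝ) ≤ (1 - 1/q) * (1 + 2/q) := by
      have e : (1 - 1/q) * (1 + 2/q) = 1 + 1/q - 2/q^2 := by
        field_simp
        ring
      have h3 : 2/q^2 ≤ 1/q := by
        rw [div_le_div_iff₀ (by positivity) hq0]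
        nlinarith
      rw [e]
      linarith
    calc (1:ℝ) ≤ (q^n * (1 - 1/q)) * ((1/q)^n * (1 + 2/q)) := by
          rw [show (q^n * (1 - 1/q)) * ((1/q)^n * (1 + 2/q))
              = (q^n * (1/q)^n) * ((1 - 1/q) * (1 + 2/q)) by ring, hqn1, one_mul]
          exact h2
    _ ≤ (q^n * (1 - 1/q)) * zCoeff n q :=
          mul_le_mul_of_nonneg_left hzge (by positivity)
  -- Pden identity
  have hPden : Pden q l = q^(n + 2*nStat l) * A := by
    unfold Pden
    rw [Finset.prod_mul_distrib, hAdef]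
    congr 1
    rw [Finset.prod_pow_eq_pow_sum, sum_conjPart_sq l]
  -- A bound
  have hAle : A ≤ 1 - 1/q := by
    obtain ⟨p, hp⟩ : ∃ p, p ∈ l.parts := by
      apply Multiset.exists_mem_of_ne_zero
      intro h0
      have := l.parts_sum
      rw [h0] at this
      simp at this
      omega
    have hp1 : 1 ≤ p := l.parts_pos hp
    have hpn : p ≤ n := parts_le l p hp
    have hpmem : p ∈ Icc 1 n := mem_Icc.2 ⟨hp1, hpn⟩
    have hmult : 1 ≤ mult l p := by
      unfold mult
      have := Multiset.count_pos.2 hp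
      omega
    rw [hAdef, ← Finset.mul_prod_erase _ _ hpmem]
    calc qPoch q (mult l p) * ∏ j ∈ (Icc 1 n).erase p, qPoch q (mult l j)
        ≤ (1 - 1/q) * 1 := by
          apply mul_le_mul (qPoch_le_fac hq hmult)
          · apply Finset.prod_le_one
            · intro j _; exact le_of_lt (qPoch_pos hq _)
            · intro j _; exact qPoch_le_one hq _
          · exact Finset.prod_nonneg (fun j _ => le_of_lt (qPoch_pos hq _))
          · exact le_of_lt hx
    _ = 1 - 1/q := mul_one _
  -- the rpow step
  have hKsqrt := K_le_sqrt hn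
  have hexp : (1:ℝ) - 4 * Real.sqrt (2 * (n:ℝ)) + ((4*K : ℕ) : ℝ) ≤ 0 := by
    push_cast
    rw [← hKdef] at hKsqrt
    linarith
  have hC1 : 1 ≤ C * (1 - 1/q)^(4*K) := by
    rw [hCdef, ← Real.rpow_natCast (1 - 1/q) (4*K), ← Real.rpow_add hx]
    exact Real.one_le_rpow_of_pos_of_le_one_of_nonpos hx hx1 hexp
  -- key inequality
  have hBlow' : (1 - 1/q)^(2*K) ≤ B := by
    rw [pow_mul]
    exact hBlow
  have h4K : (1 - 1/q)^(4*K) ≤ B^2 := by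
    have e : ((1 - 1/q)^(2*K))^2 = (1 - 1/q)^(4*K) := by
      rw [← pow_mul]
      congr 1
      omega
    rw [← e]
    exact pow_le_pow_left₀ (by positivity) hBlow' 2
  have key : (1 - 1/q) * A ≤ (C * qPoch q n) * B^2 := by
    have hPn := qPoch_ge hq n
    calc (1 - 1/q) * A ≤ (1 - 1/q) * (1 - 1/q) :=
          mul_le_mul_of_nonneg_left hAle (le_of_lt hx)
    _ = (1 - 1/q)^2 := (sq _).symm
    _ ≤ (C * (1 - 1/q)^(4*K)) * (1 - 1/q)^2 :=
          le_mul_of_one_le_left (by positivity) hC1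
    _ = C * ((1 - 1/q)^2 * (1 - 1/q)^(4*K)) := by ring
    _ ≤ C * (qPoch q n * B^2) := by
          apply mul_le_mul_of_nonneg_left _ (le_of_lt hCpos)
          exact mul_le_mul hPn h4K (by positivity) (le_of_lt (qPoch_pos hq n))
    _ = (C * qPoch q n) * B^2 := by ring
  -- final assembly
  have step2 : (q^n * (1 - 1/q)) * (1/(q^(n+2*nStat l) * B^2))
      ≤ C * (q^n * qPoch q n / (q^(n+2*nStat l) * A)) := by
    rw [mul_one_div, ← mul_div_assoc, div_le_div_iff₀ (by positivity) (by positivity)]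
    calc q^n * (1 - 1/q) * (q^(n+2*nStat l) * A)
        = (q^n * q^(n+2*nStat l)) * ((1 - 1/q) * A) := by ring
    _ ≤ (q^n * q^(n+2*nStat l)) * ((C * qPoch q n) * B^2) :=
          mul_le_mul_of_nonneg_left key (by positivity)
    _ = C * (q^n * qPoch q n) * (q^(n+2*nStat l) * B^2) := by ring
  have step1 : Qmeas q l ≤ (q^n * (1 - 1/q)) * (1/(q^(n+2*nStat l) * B^2)) := by
    unfold Qmeas
    rw [Finset.prod_pow, ← hBdef]
    exact mul_le_mul_of_nonneg_right hzinv (by positivity)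
  have : Pmeas q l = q^n * qPoch q n / (q^(n+2*nStat l) * A) := by
    unfold Pmeas
    rw [hPden]
  rw [this]
  exact le_trans step1 step2
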